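/- Let Λ ⊆ Σ_A and Γ ⊆ Σ_B be Ott-Tomforde-Willis shift spaces and Φ : Λ → Γ a map with Φ(Ø) = Ø such that Φ^{-1}(Ø) is a finitely defined set. Then Φ is continuous and shift-commuting if and only if Φ is a sliding block code (Φ(x))_n = Σ_{a∈L_Γ∪{õ}} a·1_{C_a}(σ^{n−1}(x)) in which, for all a ∈ L_Γ, the set C_a is a finite (possibly empty) union of generalized cylinders of Λ. -/

import Mathlib

namespace OTW

/-- The Ott-Tomforde-Willis full shift `Σ_A`: sequences over `A ∪ {õ}` (with `õ = none`)
such that once the empty letter `õ` appears, it repeats forever. -/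
@[ext]
structure FullShift (A : Type*) where
  val : ℕ → Option A
  tail : ∀ i, val i = none → val (i + 1) = none

variable {A B : Type*}

/-- The shift map `σ`. -/
def shiftMap (x : FullShift A) : FullShift A :=
  ⟨fun i => x.val (i + 1), fun i hi => x.tail (i + 1) hi⟩

/-- The empty sequence `Ø`. -/
def emptySeq : FullShift A :=
  ⟨fun _ => none, fun _ _ => rfl⟩

theorem val_none_mono (x : FullShift A) :
    ∀ {k m : ℕ}, k ≤ m → x.val k = none → x.val m = none := by
  intro k m h hk
  induction m, h using Nat.le_induction with
  | base => exact hk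
  | succ m hm ih => exact x.tail m ih

/-- The finite sequence determined by a word `w : List A`. -/
def finSeq (w : List A) : FullShift A where
  val i := (w.drop i).head?
  tail := by
    intro i hi
    rw [List.head?_eq_none_iff] at hi ⊢
    rw [List.drop_eq_nil_iff] at hi ⊢
    omega

/-- Generalized cylinder `Z(w, F)`. -/
def Zcyl (w : List A) (F : Finset A) : Set (FullShift A) :=
  {x | (∀ i : Fin w.length, x.val i = some (w.get i)) ∧ ∀ a ∈ F, x.val w.length ≠ some a}

/-- The topology on `Σ_A` generated by the generalized cylinders. -/
instance : TopologicalSpace (FullShift A) :=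
  TopologicalSpace.generateFrom {S | ∃ (w : List A) (F : Finset A), S = Zcyl w F}

/-- The letters `L_Λ` used by sequences of `Λ`. -/
def letters (Λ : Set (FullShift A)) : Set A :=
  {a | ∃ x ∈ Λ, ∃ i, x.val i = some a}

/-- `w` is a (fully lettered) block appearing in some sequence of `Λ`. -/
def IsBlock (Λ : Set (FullShift A)) (w : List A) : Prop :=
  ∃ x ∈ Λ, ∃ n, ∀ i : Fin w.length, x.val (n + i) = some (w.get i)

/-- Ott-Tomforde-Willis shift space: closed, shift invariant, with the
infinite extension property. -/
def IsShiftSpace (Λ : Set (FullShift A)) : Prop :=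
  IsClosed Λ ∧ (∀ x ∈ Λ, shiftMap x ∈ Λ) ∧
    (emptySeq ∈ Λ ↔ (letters Λ).Infinite) ∧
    (∀ w : List A, w ≠ [] → (finSeq w ∈ Λ ↔ {b : A | IsBlock Λ (w ++ [b])}.Infinite))

/-- `x` begins with the block `b` (a word over the extended alphabet `A ∪ {õ}`). -/
def Prefixed (x : FullShift A) (b : List (Option A)) : Prop :=
  ∀ i : Fin b.length, x.val i = b.get i

/-- `(P, Q)` is a representation of `C` as a finitely defined set in `Λ`:
membership in `C` is witnessed by an initial block in `P`, and membership in the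
complement by an initial block in `Q`. -/
def FDRep (Λ C : Set (FullShift A)) (P Q : Set (List (Option A))) : Prop :=
  (∀ b ∈ P, b ≠ []) ∧ (∀ b ∈ Q, b ≠ []) ∧
    C = {x ∈ Λ | ∃ b ∈ P, Prefixed x b} ∧
    Λ \ C = {x ∈ Λ | ∃ b ∈ Q, Prefixed x b}

/-- `C` is a finitely defined set in `Λ`. -/
def FinitelyDefinedIn (Λ C : Set (FullShift A)) : Prop :=
  ∃ P Q, FDRep Λ C P Q

/-- `S` is a finite (possibly empty) union of generalized cylinders of `Λ`. -/
def IsFinUnionCyl (Λ S : Set (FullShift A)) : Prop :=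
  ∃ (n : ℕ) (w : Fin n → List A) (F : Fin n → Finset A),
    S = Λ ∩ ⋃ i, Zcyl (w i) (F i)

/-- `Φ` is the sliding block code determined by the partition `{C_a}` of `Λ` into
finitely defined sets, with `C_õ` shift invariant. -/
def IsSBCWith (Λ : Set (FullShift A)) (Φ : FullShift A → FullShift B)
    (C : Option B → Set (FullShift A)) : Prop :=
  (∀ a, C a ⊆ Λ) ∧ (∀ x ∈ Λ, ∃! a, x ∈ C a) ∧
    (∀ a, FinitelyDefinedIn Λ (C a)) ∧
    (∀ x ∈ C none, shiftMap x ∈ C none) ∧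
    (∀ x ∈ Λ, ∀ n : ℕ, shiftMap^[n] x ∈ C ((Φ x).val n))

/-- Sliding block code. -/
def IsSlidingBlockCode (Λ : Set (FullShift A)) (Φ : FullShift A → FullShift B) : Prop :=
  ∃ C, IsSBCWith Λ Φ C

/-- Row-finite shift: every letter has a finite follower set. -/
def RowFinite (Λ : Set (FullShift A)) : Prop :=
  ∀ a ∈ letters Λ, {b : A | IsBlock Λ [a, b]}.Finite

/-- The `M`-th higher block code `Ξ^(M)`. -/
noncomputable def higherBlock (M : ℕ) (x : FullShift A) : FullShift (Fin M → A) where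
  val i := if h : ∀ j : Fin M, (x.val (i + j)).isSome then
      some (fun j => (x.val (i + j)).get (h j)) else none
  tail := by
    intro i hi
    try dsimp only at hi ⊢
    have h1 : ¬ ∀ j : Fin M, (x.val (i + j)).isSome := by
      intro h
      rw [dif_pos h] at hi
      simp at hi
    push_neg at h1
    obtain ⟨j, hj⟩ := h1
    have hjn : x.val (i + j) = none := Option.not_isSome_iff_eq_none.mp hj
    have hM : (0 : ℕ) < M := j.pos
    rw [dif_neg]
    intro h2
    have hsome := h2 ⟨M - 1, by omega⟩
    have hnone : x.val (i + 1 + ((⟨M - 1, by omega⟩ : Fin M) : ℕ)) = none := by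
      apply val_none_mono x ?_ hjn
      have := j.isLt
      simp only [Fin.val_mk]
      omega
    rw [hnone] at hsome
    simp at hsome


section Aux
variable {A B : Type*}

lemma val_iterate (x : FullShift A) (j i : ℕ) : (shiftMap^[j] x).val i = x.val (i + j) := by
  induction j generalizing x with
  | zero => rfl
  | succ j ih =>
    rw [Function.iterate_succ_apply, ih]
    show x.val (i + j + 1) = _
    ring_nf

lemma eq_emptySeq_of_val_eq_none {x : FullShift A} {j : ℕ} (h : x.val j = none) :
    shiftMap^[j] x = emptySeq := by
  refine FullShift.ext (funext fun n => ?_)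
  rw [val_iterate]
  exact val_none_mono x (Nat.le_add_left j n) h

lemma mem_Zcyl {x : FullShift A} {w : List A} {F : Finset A} :
    x ∈ Zcyl w F ↔ (∀ i : Fin w.length, x.val i = some (w.get i)) ∧
      ∀ a ∈ F, x.val w.length ≠ some a := Iff.rfl

lemma isOpen_Zcyl (w : List A) (F : Finset A) : IsOpen (Zcyl w F) :=
  TopologicalSpace.GenerateOpen.basic _ ⟨w, F, rfl⟩

lemma val_isSome_of_le {x : FullShift A} {k m : ℕ} (h : k ≤ m) (hm : (x.val m).isSome) :
    (x.val k).isSome := by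
  by_contra hk
  rw [Option.not_isSome_iff_eq_none] at hk
  rw [val_none_mono x h hk] at hm
  simp at hm

end Aux
section Compact
variable {A : Type*}

lemma le_nhds_of_cyl {f : Filter (FullShift A)} {z : FullShift A}
    (h : ∀ (w : List A) (F : Finset A), z ∈ Zcyl w F → Zcyl w F ∈ f) : f ≤ nhds z := by
  suffices h2 : f ≤ @nhds _ (TopologicalSpace.generateFrom
      {S | ∃ (w : List A) (F : Finset A), S = Zcyl w F}) z from h2
  rw [TopologicalSpace.nhds_generateFrom]
  refine le_iInf₂ ?_
  rintro s ⟨hzs, w, F, rfl⟩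
  exact Filter.le_principal_iff.mpr (h w F hzs)

instance : CompactSpace (FullShift A) := by
  constructor
  rw [isCompact_iff_ultrafilter_le_nhds]
  intro f _
  classical
  -- the letter chosen at each position, if any
  by_cases hall : ∀ n : ℕ, ∃ a : A, {x : FullShift A | x.val n = some a} ∈ f
  · -- limit is an infinite sequence
    choose g hg using hall
    refine ⟨⟨fun n => some (g n), fun i hi => by simp at hi⟩, Set.mem_univ _, ?_⟩
    refine le_nhds_of_cyl ?_
    rintro w F ⟨h1, h2⟩
    have key : (⋂ j : Fin (w.length + 1), {x : FullShift A | x.val j = some (g j)}) ∈ f :=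
      Filter.iInter_mem.mpr fun j => hg j
    refine f.toFilter.mem_of_superset key ?_
    intro x hx
    simp only [Set.mem_iInter, Set.mem_setOf_eq] at hx
    constructor
    · intro i
      have h1i := h1 i
      simp only at h1i
      have := hx ⟨i, Nat.lt_succ_of_lt i.isLt⟩
      rw [this]
      have : some (g i) = some (w.get i) := by
        rw [← h1i]
      rw [this]
    · intro a ha hxa
      have := hx ⟨w.length, Nat.lt_succ_self _⟩
      rw [this] at hxa
      have h2a := h2 a ha
      have : (⟨fun n => some (g n), fun i hi => by simp at hi⟩ : FullShift A).val w.length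
          = some (g w.length) := rfl
      rw [this] at h2a
      exact h2a (by rw [← hxa])
  · -- limit is a finite sequence
    push_neg at hall
    have hex : ∃ n, ∀ a : A, {x : FullShift A | x.val n = some a} ∉ f := hall
    set k := Nat.find hex with hk
    have hkspec : ∀ a : A, {x : FullShift A | x.val k = some a} ∉ f := Nat.find_spec hex
    have hlt : ∀ n < k, ∃ a : A, {x : FullShift A | x.val n = some a} ∈ f := by
      intro n hn
      by_contra hc
      push_neg at hc
      exact Nat.find_min hex hn hc
    choose g hg using hlt
    refine ⟨⟨fun n => if h : n < k then some (g n h) else none, ?_⟩, Set.mem_univ _, ?_⟩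
    · intro i hi
      have : ¬ i < k := by
        intro h
        rw [dif_pos h] at hi
        exact nomatch hi
      rw [dif_neg (by omega)]
    · refine le_nhds_of_cyl ?_
      rintro w F ⟨h1, h2⟩
      have hjk : ∀ i : Fin w.length, (i : ℕ) < k := by
        intro i
        by_contra hc
        have h1i := h1 i
        simp only at h1i
        rw [dif_neg hc] at h1i
        exact nomatch h1i
      have hgw : ∀ i : Fin w.length, w.get i = g i (hjk i) := by
        intro i
        have h1i := h1 i
        simp only at h1i
        rw [dif_pos (hjk i)] at h1i
        exact (Option.some_injective _ h1i.symm)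
      have hS1 : (⋂ i : Fin w.length, {x : FullShift A | x.val i = some (w.get i)}) ∈ f := by
        refine Filter.iInter_mem.mpr fun i => ?_
        rw [hgw i]
        exact hg i (hjk i)
      have hS2 : {x : FullShift A | ∀ a ∈ F, x.val w.length ≠ some a} ∈ f := by
        have hwk : w.length ≤ k := by
          rcases Nat.eq_zero_or_pos w.length with h0 | h0
          · omega
          · have := hjk ⟨w.length - 1, by omega⟩
            simp only at this
            omega
        rcases lt_or_eq_of_le hwk with hlt' | heq
        · refine f.toFilter.mem_of_superset (hg w.length hlt') ?_
          intro x hx a ha hxa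
          simp only [Set.mem_setOf_eq] at hx
          rw [hx] at hxa
          have h2a := h2 a ha
          simp only at h2a
          rw [dif_pos hlt'] at h2a
          exact h2a (by rw [hxa])
        · have : {x : FullShift A | ∀ a ∈ F, x.val w.length ≠ some a}
              = ⋂ a ∈ (F : Finset A), {x : FullShift A | x.val w.length ≠ some a} := by
            ext x
            simp
          rw [this]
          refine (Filter.biInter_finset_mem F).mpr fun a _ => ?_
          have : {x : FullShift A | x.val w.length ≠ some a}
              = {x : FullShift A | x.val w.length = some a}ᶜ := rfl
          rw [this]
          exact (Ultrafilter.compl_mem_iff_notMem).mpr (by rw [heq]; exact hkspec a)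
      refine f.toFilter.mem_of_superset (Filter.inter_mem hS1 hS2) ?_
      rintro x ⟨hx1, hx2⟩
      simp only [Set.mem_iInter, Set.mem_setOf_eq] at hx1 hx2
      exact ⟨fun i => hx1 i, hx2⟩

end Compact
section Basis
variable {A : Type*}

lemma cyl_inter {y : FullShift A} {u1 u2 : List A} {F1 F2 : Finset A}
    (h1 : y ∈ Zcyl u1 F1) (h2 : y ∈ Zcyl u2 F2) :
    ∃ (u : List A) (F : Finset A), y ∈ Zcyl u F ∧ Zcyl u F ⊆ Zcyl u1 F1 ∩ Zcyl u2 F2 := by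
  classical
  -- helper: if |u1| < |u2| then Zcyl u2 F2 ⊆ Zcyl u1 F1
  have key : ∀ (v1 v2 : List A) (G1 G2 : Finset A), v1.length < v2.length →
      y ∈ Zcyl v1 G1 → y ∈ Zcyl v2 G2 → Zcyl v2 G2 ⊆ Zcyl v1 G1 := by
    intro v1 v2 G1 G2 hlen hy1 hy2 z hz
    have hvv : ∀ i : Fin v1.length, v1.get i = v2.get ⟨i, by omega⟩ := by
      intro i
      have e1 := hy1.1 i
      have e2 := hy2.1 ⟨i, by omega⟩
      simp only at e1 e2
      rw [e1] at e2
      exact Option.some_injective _ e2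
    have hnotF : v2.get ⟨v1.length, hlen⟩ ∉ G1 := by
      intro hmem
      have e2 := hy2.1 ⟨v1.length, hlen⟩
      exact hy1.2 _ hmem (by rw [← e2])
    constructor
    · intro i
      have := hz.1 ⟨i, by omega⟩
      rw [this, hvv i]
    · intro a ha hza
      have := hz.1 ⟨v1.length, hlen⟩
      rw [this] at hza
      have : v2.get ⟨v1.length, hlen⟩ = a := Option.some_injective _ hza
      exact hnotF (this ▸ ha)
  rcases lt_trichotomy u1.length u2.length with hlt | heq | hgt
  · exact ⟨u2, F2, h2, fun z hz => ⟨key u1 u2 F1 F2 hlt h1 h2 hz, hz⟩⟩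
  · have hu : u1 = u2 := by
      apply List.ext_get heq
      intro i hi1 hi2
      have e1 := h1.1 ⟨i, hi1⟩
      have e2 := h2.1 ⟨i, hi2⟩
      simp only at e1 e2
      rw [e1] at e2
      exact Option.some_injective _ e2
    subst hu
    refine ⟨u1, F1 ∪ F2, ⟨h1.1, ?_⟩, ?_⟩
    · intro a ha
      rcases Finset.mem_union.mp ha with h | h
      · exact h1.2 a h
      · exact h2.2 a h
    · intro z hz
      refine ⟨⟨hz.1, fun a ha => hz.2 a (Finset.mem_union_left _ ha)⟩,
        ⟨hz.1, fun a ha => hz.2 a (Finset.mem_union_right _ ha)⟩⟩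
  · exact ⟨u1, F1, h1, fun z hz => ⟨hz, key u2 u1 F2 F1 hgt h2 h1 hz⟩⟩

lemma exists_cyl_subset {O : Set (FullShift A)} (hO : IsOpen O) {y : FullShift A} (hy : y ∈ O) :
    ∃ (u : List A) (F : Finset A), y ∈ Zcyl u F ∧ Zcyl u F ⊆ O := by
  have h : TopologicalSpace.GenerateOpen
      {S | ∃ (w : List A) (F : Finset A), S = Zcyl w F} O := hO
  clear hO
  induction h with
  | basic s hs =>
    obtain ⟨w, F, rfl⟩ := hs
    exact ⟨w, F, hy, subset_rfl⟩
  | univ =>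
    refine ⟨[], ∅, ⟨fun i => absurd i.isLt (by simp), by simp⟩, Set.subset_univ _⟩
  | inter s t _ _ ihs iht =>
    obtain ⟨u1, F1, hy1, hsub1⟩ := ihs hy.1
    obtain ⟨u2, F2, hy2, hsub2⟩ := iht hy.2
    obtain ⟨u, F, hyu, hsub⟩ := cyl_inter hy1 hy2
    exact ⟨u, F, hyu, fun z hz => ⟨hsub1 (hsub hz).1, hsub2 (hsub hz).2⟩⟩
  | sUnion S _ ih =>
    obtain ⟨s, hsS, hys⟩ := hy
    obtain ⟨u, F, hyu, hsub⟩ := ih s hsS hys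
    exact ⟨u, F, hyu, hsub.trans (Set.subset_sUnion_of_mem hsS)⟩

end Basis
section Helpers
variable {A B : Type*}

lemma isOpen_subtype_pointwise {X : Type*} [TopologicalSpace X] {Λ : Set X} {S : Set Λ}
    (h : ∀ p : Λ, p ∈ S → ∃ U : Set X, IsOpen U ∧ (p : X) ∈ U ∧
      ∀ q : Λ, (q : X) ∈ U → q ∈ S) : IsOpen S := by
  classical
  choose! U hUopen hUmem hUsub using h
  have : S = Subtype.val ⁻¹' (⋃ (p : Λ) (_ : p ∈ S), U p) := by
    ext q
    simp only [Set.mem_preimage, Set.mem_iUnion]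
    constructor
    · intro hq
      exact ⟨q, hq, hUmem q hq⟩
    · rintro ⟨p, hp, hq⟩
      exact hUsub p hp q hq
  rw [this]
  exact (isOpen_iUnion fun p => isOpen_iUnion fun hp => hUopen p hp).preimage
    continuous_subtype_val

lemma iterate_mem {Λ : Set (FullShift A)} (hΛ : ∀ x ∈ Λ, shiftMap x ∈ Λ)
    {x : FullShift A} (hx : x ∈ Λ) (n : ℕ) : shiftMap^[n] x ∈ Λ := by
  induction n with
  | zero => exact hx
  | succ n ih => rw [Function.iterate_succ_apply']; exact hΛ _ ih

/-- The key neighborhood lemma: if `σ^j y` lies in a cylinder and `y.val j` is a letter,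
then there is a cylinder around `y` whose members are all mapped into that
cylinder by `σ^j`. -/
lemma key_nbhd {y : FullShift A} {j : ℕ} {w : List A} {F : Finset A}
    (hsome : (y.val j).isSome) (hmem : shiftMap^[j] y ∈ Zcyl w F) :
    ∃ p : List A, y ∈ Zcyl p F ∧ ∀ z ∈ Zcyl p F, shiftMap^[j] z ∈ Zcyl w F := by
  classical
  have hval : ∀ l, l < j + w.length → (y.val l).isSome := by
    intro l hl
    rcases Nat.lt_or_ge l j with h | h
    · exact val_isSome_of_le (le_of_lt h) hsome
    · have : l - j < w.length := by omega
      have e := hmem.1 ⟨l - j, this⟩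
      rw [val_iterate] at e
      have : (l - j) + j = l := by omega
      rw [this] at e
      rw [e]
      rfl
  set p : List A := List.ofFn (fun l : Fin (j + w.length) => (y.val l).get (hval l l.isLt))
    with hp
  have hplen : p.length = j + w.length := by simp [hp]
  have hpget : ∀ i : Fin p.length, y.val i = some (p.get i) := by
    intro i
    have : p.get i = (y.val i).get (hval i (by omega)) := by
      simp [hp, List.get_ofFn]
    rw [this, Option.some_get]
  refine ⟨p, ⟨hpget, ?_⟩, ?_⟩
  · -- F-condition for y at position p.length = j + w.length
    intro a ha hya
    rw [hplen] at hya
    have := hmem.2 a ha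
    rw [val_iterate] at this
    rw [Nat.add_comm j w.length] at hya
    exact this hya
  · intro z hz
    constructor
    · intro i
      have hlt : (i : ℕ) + j < p.length := by rw [hplen]; omega
      have e := hz.1 ⟨(i : ℕ) + j, hlt⟩
      rw [val_iterate]
      simp only at e
      rw [e]
      -- p.get (i+j) = w.get i
      have e2 := hmem.1 i
      rw [val_iterate] at e2
      have e3 := hpget ⟨(i : ℕ) + j, hlt⟩
      simp only at e3
      rw [e2] at e3
      exact e3.symm
    · intro a ha hza
      rw [val_iterate] at hza
      have := hz.2 a ha
      rw [hplen, Nat.add_comm j w.length] at this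
      exact this hza

end Helpers
section Prefixes
variable {A : Type*}

lemma exists_letter_prefix (y : FullShift A) (m : ℕ) (hval : ∀ l, l < m → (y.val l).isSome) :
    ∃ p : List A, p.length = m ∧ ∀ i : Fin p.length, y.val i = some (p.get i) := by
  classical
  refine ⟨List.ofFn (fun l : Fin m => (y.val l).get (hval l l.isLt)), by simp, ?_⟩
  intro i
  have : (List.ofFn (fun l : Fin m => (y.val l).get (hval l l.isLt))).get i
      = (y.val i).get (hval i (by have := i.isLt; simpa using this)) := by
    simp [List.get_ofFn]
  rw [this, Option.some_get]

end Prefixes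
section Backward
variable {A B : Type*}

lemma backward_continuousOn
    (Λ : Set (FullShift A)) (hshift : ∀ x ∈ Λ, shiftMap x ∈ Λ)
    (Φ : FullShift A → FullShift B) (hO : emptySeq ∈ Λ) (hOO : Φ emptySeq = emptySeq)
    (C : Option B → Set (FullShift A)) (hsbc : IsSBCWith Λ Φ C)
    (hcyl : ∀ b : B, IsFinUnionCyl Λ (C (some b))) : ContinuousOn Φ Λ := by
  classical
  obtain ⟨hC1, hC2, hC3, hC4, hC5⟩ := hsbc
  have huniq : ∀ x ∈ Λ, ∀ a a', x ∈ C a → x ∈ C a' → a = a' := by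
    intro x hx a a' h h'
    obtain ⟨c, -, hcu⟩ := hC2 x hx
    rw [hcu a h, hcu a' h']
  have hempty : emptySeq ∈ C none := by
    have h := hC5 emptySeq hO 0
    rw [hOO] at h
    exact h
  have hval_of : ∀ x ∈ Λ, ∀ (m : ℕ) (a : Option B), shiftMap^[m] x ∈ C a → (Φ x).val m = a :=
    fun x hx m a h => huniq _ (iterate_mem hshift hx m) _ _ (hC5 x hx m) h
  have hnotnone : ∀ x ∈ Λ, ∀ (m : ℕ) (b : B), (Φ x).val m = some b → (x.val m).isSome := by
    intro x hx m b hb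
    rw [Option.isSome_iff_ne_none]
    intro hnone
    have h1 : shiftMap^[m] x ∈ C none := (eq_emptySeq_of_val_eq_none hnone) ▸ hempty
    have := hval_of x hx m none h1
    rw [hb] at this
    exact nomatch this
  choose nn ww Fcc hrep using hcyl
  -- a neighborhood forcing `(Φ z).val j = some c`
  have hsomeNbhd : ∀ (y : FullShift A), y ∈ Λ → ∀ (j : ℕ) (c : B), (Φ y).val j = some c →
      ∃ N : Set (FullShift A), IsOpen N ∧ y ∈ N ∧
        ∀ z ∈ N, z ∈ Λ → (Φ z).val j = some c := by
    intro y hy j c hc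
    have hyCj : shiftMap^[j] y ∈ C (some c) := hc ▸ hC5 y hy j
    have hysome : (y.val j).isSome := hnotnone y hy j c hc
    rw [hrep c] at hyCj
    obtain ⟨-, hyU⟩ := hyCj
    rw [Set.mem_iUnion] at hyU
    obtain ⟨t, hyt⟩ := hyU
    obtain ⟨p, hyp, hsub⟩ := key_nbhd hysome hyt
    refine ⟨Zcyl p (Fcc c t), isOpen_Zcyl _ _, hyp, fun z hzN hzΛ => ?_⟩
    refine hval_of z hzΛ j (some c) ?_
    rw [hrep c]
    exact ⟨iterate_mem hshift hzΛ j, Set.mem_iUnion.2 ⟨t, hsub z hzN⟩⟩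
  rw [continuousOn_iff_continuous_restrict]
  have key : @Continuous _ _ _ (TopologicalSpace.generateFrom
      {S | ∃ (w : List B) (F : Finset B), S = Zcyl w F}) (Λ.restrict Φ) := by
    rw [continuous_generateFrom_iff]
    rintro s ⟨v, G, rfl⟩
    apply isOpen_subtype_pointwise
    rintro ⟨y, hyΛ⟩ hyS
    have hyZ : Φ y ∈ Zcyl v G := hyS
    -- neighborhoods for the letter positions
    have hpos : ∀ j : Fin v.length, ∃ N : Set (FullShift A), IsOpen N ∧ y ∈ N ∧
        ∀ z ∈ N, z ∈ Λ → (Φ z).val j = some (v.get j) :=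
      fun j => hsomeNbhd y hyΛ j (v.get j) (hyZ.1 j)
    choose Npos hNopen hNmem hNval using hpos
    -- neighborhood for the tail position i = v.length
    have htail : ∃ N : Set (FullShift A), IsOpen N ∧ y ∈ N ∧
        ∀ z ∈ N, z ∈ Λ → ∀ a ∈ G, (Φ z).val v.length ≠ some a := by
      set i := v.length with hi
      cases hcase : (Φ y).val i with
      | some c =>
        obtain ⟨N, hNo, hNm, hNv⟩ := hsomeNbhd y hyΛ i c hcase
        refine ⟨N, hNo, hNm, fun z hzN hzΛ a ha hza => ?_⟩
        rw [hNv z hzN hzΛ] at hza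
        have hca : (c : B) = a := Option.some_injective _ hza
        exact hyZ.2 a ha (hca ▸ hcase)
      | none =>
        have hyCnone : shiftMap^[i] y ∈ C none := hcase ▸ hC5 y hyΛ i
        by_cases hfin : ∃ m, y.val m = none
        · -- y is a finite sequence
          set k := Nat.find hfin with hkdef
          have hknone : y.val k = none := Nat.find_spec hfin
          have hkmin : ∀ l, l < k → (y.val l).isSome := by
            intro l hl
            rw [Option.isSome_iff_ne_none]
            exact Nat.find_min hfin hl
          have hik : i ≤ k := by
            by_contra hc
            push_neg at hc
            have h1 := hyZ.1 ⟨k, hc⟩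
            have := hnotnone y hyΛ k (v.get ⟨k, hc⟩) h1
            rw [hknone] at this
            simp at this
          obtain ⟨u, hulen, huget⟩ := exists_letter_prefix y k hkmin
          set Fstar : Finset A := G.biUnion (fun a =>
            (Finset.univ : Finset (Fin (nn a))).biUnion (fun t => (ww a t).toFinset))
            with hFstar
          refine ⟨Zcyl u Fstar, isOpen_Zcyl _ _, ⟨huget, ?_⟩, ?_⟩
          · intro a _ hya
            rw [hulen, hknone] at hya
            exact nomatch hya
          · intro z hzN hzΛ a ha hza
            have hzCa : shiftMap^[i] z ∈ C (some a) := hza ▸ hC5 z hzΛ i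
            rw [hrep a] at hzCa
            obtain ⟨-, hzU⟩ := hzCa
            rw [Set.mem_iUnion] at hzU
            obtain ⟨t, hzt⟩ := hzU
            set W := ww a t with hW
            rcases Nat.lt_or_ge k (i + W.length) with hcase2 | hcase2
            · -- z.val k is a letter of W, contradicting z ∈ Zcyl u Fstar
              have hki' : k - i < W.length := by omega
              have e := hzt.1 ⟨k - i, hki'⟩
              rw [val_iterate] at e
              have : k - i + i = k := by omega
              rw [this] at e
              have : z.val u.length ≠ some (W.get ⟨k - i, hki'⟩) := by
                refine hzN.2 _ ?_
                rw [hFstar]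
                refine Finset.mem_biUnion.2 ⟨a, ha, Finset.mem_biUnion.2
                  ⟨t, Finset.mem_univ t, ?_⟩⟩
                rw [List.mem_toFinset]
                exact List.get_mem _ _
              rw [hulen] at this
              exact this e
            · -- σ^i y would belong to C (some a), contradiction
              have hyW : shiftMap^[i] y ∈ Zcyl W (Fcc a t) := by
                constructor
                · intro l
                  have hli : (l : ℕ) + i < k := by have := l.isLt; omega
                  have hlu : (l : ℕ) + i < u.length := by rw [hulen]; exact hli
                  have ey := huget ⟨(l : ℕ) + i, hlu⟩
                  have ez := hzN.1 ⟨(l : ℕ) + i, hlu⟩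
                  have ez2 := hzt.1 l
                  rw [val_iterate] at ez2 ⊢
                  simp only at ey ez ez2
                  rw [ez] at ez2
                  rw [ey, ez2]
                · intro a' ha' hya'
                  rw [val_iterate] at hya'
                  rcases Nat.lt_or_ge (W.length + i) k with h3 | h3
                  · have hlu : W.length + i < u.length := by rw [hulen]; exact h3
                    have ey := huget ⟨W.length + i, hlu⟩
                    have ez := hzN.1 ⟨W.length + i, hlu⟩
                    simp only at ey ez
                    have := hzt.2 a' ha'
                    rw [val_iterate] at this
                    apply this
                    rw [ez, ← ey]
                    exact hya'
                  · have : W.length + i = k := by omega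
                    rw [this, hknone] at hya'
                    exact nomatch hya'
              have : shiftMap^[i] y ∈ C (some a) := by
                rw [hrep a]
                exact ⟨iterate_mem hshift hyΛ i, Set.mem_iUnion.2 ⟨t, hyW⟩⟩
              have := huniq _ (iterate_mem hshift hyΛ i) _ _ hyCnone this
              exact nomatch this
        · -- y is an infinite sequence: use finitely-definedness of C none
          push_neg at hfin
          obtain ⟨P, Q, hP0, hQ0, hPeq, hQeq⟩ := hC3 none
          have : shiftMap^[i] y ∈ {x ∈ Λ | ∃ b ∈ P, Prefixed x b} := by
            rw [← hPeq]; exact hyCnone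
          obtain ⟨-, b, hbP, hbpre⟩ := this
          obtain ⟨p, hplen, hpget⟩ := exists_letter_prefix y (i + b.length)
            (fun l _ => Option.isSome_iff_ne_none.2 (hfin l))
          refine ⟨Zcyl p ∅, isOpen_Zcyl _ _, ⟨hpget, by simp⟩, ?_⟩
          intro z hzN hzΛ a ha hza
          have hzpre : Prefixed (shiftMap^[i] z) b := by
            intro l
            have hlp : (l : ℕ) + i < p.length := by rw [hplen]; have := l.isLt; omega
            have ez := hzN.1 ⟨(l : ℕ) + i, hlp⟩
            have ey := hpget ⟨(l : ℕ) + i, hlp⟩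
            have eb := hbpre l
            rw [val_iterate] at eb
            simp only at ez ey
            rw [val_iterate, ez, ← ey, eb]
          have : shiftMap^[i] z ∈ C none := by
            rw [hPeq]
            exact ⟨iterate_mem hshift hzΛ i, b, hbP, hzpre⟩
          have := hval_of z hzΛ i none this
          rw [hza] at this
          exact nomatch this
    obtain ⟨Nt, hNto, hNtm, hNtv⟩ := htail
    refine ⟨Nt ∩ ⋂ j : Fin v.length, Npos j, ?_, ⟨hNtm, Set.mem_iInter.2 hNmem⟩, ?_⟩
    · exact hNto.inter (isOpen_iInter_of_finite hNopen)
    · rintro ⟨z, hzΛ⟩ ⟨hzt, hzp⟩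
      rw [Set.mem_iInter] at hzp
      exact ⟨fun j => hNval j z (hzp j) hzΛ, fun a ha => hNtv z hzt hzΛ a ha⟩
  exact key

end Backward
section MoreAux
variable {A B : Type*}

lemma backward_commute
    (Λ : Set (FullShift A)) (hshift : ∀ x ∈ Λ, shiftMap x ∈ Λ)
    (Φ : FullShift A → FullShift B)
    (C : Option B → Set (FullShift A)) (hsbc : IsSBCWith Λ Φ C) :
    ∀ x ∈ Λ, Φ (shiftMap x) = shiftMap (Φ x) := by
  obtain ⟨hC1, hC2, hC3, hC4, hC5⟩ := hsbc
  have huniq : ∀ x ∈ Λ, ∀ a a', x ∈ C a → x ∈ C a' → a = a' := by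
    intro x hx a a' h h'
    obtain ⟨c, -, hcu⟩ := hC2 x hx
    rw [hcu a h, hcu a' h']
  intro x hx
  refine FullShift.ext (funext fun m => ?_)
  have h1 : shiftMap^[m] (shiftMap x) ∈ C ((Φ (shiftMap x)).val m) := hC5 _ (hshift x hx) m
  have h2 : shiftMap^[m + 1] x ∈ C ((Φ x).val (m + 1)) := hC5 x hx (m + 1)
  rw [Function.iterate_succ_apply] at h2
  exact huniq _ (iterate_mem hshift (hshift x hx) m) _ _ h1 h2

lemma prefixed_ofFn_self (x : FullShift A) (m : ℕ) :
    Prefixed x (List.ofFn fun l : Fin m => x.val l) := by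
  intro i
  have hi : (i : ℕ) < m := by have := i.isLt; simpa using this
  simp [List.get_ofFn]

lemma eq_of_prefixed_ofFn {x z : FullShift A} {m : ℕ}
    (h : Prefixed z (List.ofFn fun l : Fin m => x.val l)) :
    ∀ l, l < m → z.val l = x.val l := by
  intro l hl
  have hlen : (List.ofFn fun l : Fin m => x.val l).length = m := by simp
  have := h ⟨l, by rw [hlen]; exact hl⟩
  simpa [List.get_ofFn] using this

lemma fd_of_finUnionCyl {Λ S : Set (FullShift A)}
    (h : IsFinUnionCyl Λ S) : FinitelyDefinedIn Λ S := by
  classical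
  obtain ⟨n, w, F, rfl⟩ := h
  set U := ⋃ i : Fin n, Zcyl (w i) (F i) with hU
  refine ⟨{p | p ≠ [] ∧ ∀ x : FullShift A, Prefixed x p → x ∈ U},
    {p | p ≠ [] ∧ ∀ x : FullShift A, Prefixed x p → x ∉ U},
    fun b hb => hb.1, fun b hb => hb.1, ?_, ?_⟩
  · ext x
    constructor
    · rintro ⟨hxΛ, hxU⟩
      rw [hU, Set.mem_iUnion] at hxU
      obtain ⟨i, hxi⟩ := hxU
      refine ⟨hxΛ, List.ofFn fun l : Fin ((w i).length + 1) => x.val l,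
        ⟨?_, ?_⟩, prefixed_ofFn_self x _⟩
      · have hlen : (List.ofFn fun l : Fin ((w i).length + 1) => x.val l).length
            = (w i).length + 1 := by simp
        intro hnil
        rw [hnil] at hlen
        simp at hlen
      · intro z hz
        rw [hU, Set.mem_iUnion]
        refine ⟨i, ⟨fun l => ?_, fun a ha => ?_⟩⟩
        · rw [eq_of_prefixed_ofFn hz l (by have := l.isLt; omega)]
          exact hxi.1 l
        · rw [eq_of_prefixed_ofFn hz _ (Nat.lt_succ_self _)]
          exact hxi.2 a ha
    · rintro ⟨hxΛ, p, ⟨-, hp⟩, hpre⟩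
      exact ⟨hxΛ, hp x hpre⟩
  · ext x
    constructor
    · rintro ⟨hxΛ, hxC⟩
      have hxU : x ∉ U := fun h => hxC ⟨hxΛ, h⟩
      set L := (Finset.univ.sup fun i : Fin n => (w i).length) + 1 with hL
      refine ⟨hxΛ, List.ofFn fun l : Fin L => x.val l, ⟨?_, ?_⟩, prefixed_ofFn_self x _⟩
      · have : (List.ofFn fun l : Fin L => x.val l).length = L := by simp [hL]
        intro hnil
        rw [hnil] at this
        simp [hL] at this
      · intro z hz hzU
        apply hxU
        rw [hU, Set.mem_iUnion] at hzU ⊢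
        obtain ⟨i, hzi⟩ := hzU
        have hwi : (w i).length < L := by
          rw [hL]
          exact Nat.lt_succ_of_le (Finset.le_sup (f := fun i : Fin n => (w i).length)
            (Finset.mem_univ i))
        refine ⟨i, ⟨fun l => ?_, fun a ha => ?_⟩⟩
        · rw [← eq_of_prefixed_ofFn hz l (by have := l.isLt; omega)]
          exact hzi.1 l
        · rw [← eq_of_prefixed_ofFn hz _ hwi]
          exact hzi.2 a ha
    · rintro ⟨hxΛ, p, ⟨-, hp⟩, hpre⟩
      exact ⟨hxΛ, fun hxC => hp x hpre hxC.2⟩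

end MoreAux
section ForwardCyl
variable {A B : Type*}

lemma mem_cyl_singleton {y : FullShift B} {b : B} : y ∈ Zcyl [b] ∅ ↔ y.val 0 = some b := by
  constructor
  · intro h
    exact h.1 ⟨0, by simp⟩
  · intro h
    refine ⟨fun i => ?_, by simp⟩
    rcases i with ⟨iv, hiv⟩
    simp only [List.length_singleton] at hiv
    obtain rfl : iv = 0 := by omega
    exact h

lemma mem_cyl_nil {y : FullShift B} {b : B} : y ∈ Zcyl [] {b} ↔ y.val 0 ≠ some b := by
  constructor
  · intro h
    exact h.2 b (Finset.mem_singleton_self b)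
  · intro h
    refine ⟨fun i => absurd i.isLt (by simp), fun a ha => ?_⟩
    rw [Finset.mem_singleton] at ha
    rw [ha]
    exact h

lemma forward_cyl {Λ : Set (FullShift A)} (hΛc : IsClosed Λ)
    {Φ : FullShift A → FullShift B} (hcont : ContinuousOn Φ Λ) (b : B) :
    IsFinUnionCyl Λ {x ∈ Λ | (Φ x).val 0 = some b} := by
  classical
  obtain ⟨u, huo, hueq⟩ := continuousOn_iff'.mp hcont (Zcyl [b] ∅) (isOpen_Zcyl _ _)
  obtain ⟨u', hu'o, hu'eq⟩ := continuousOn_iff'.mp hcont (Zcyl [] ({b} : Finset B))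
    (isOpen_Zcyl _ _)
  set Cb := {x ∈ Λ | (Φ x).val 0 = some b} with hCb
  have hCU : Cb = u ∩ Λ := by
    rw [← hueq]
    ext x
    simp only [hCb, Set.mem_setOf_eq, Set.mem_inter_iff, Set.mem_preimage, mem_cyl_singleton]
    tauto
  have hCV : {x ∈ Λ | (Φ x).val 0 ≠ some b} = u' ∩ Λ := by
    rw [← hu'eq]
    ext x
    simp only [Set.mem_setOf_eq, Set.mem_inter_iff, Set.mem_preimage, mem_cyl_nil]
    tauto
  have hCb_eq : Cb = Λ ∩ u'ᶜ := by
    ext x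
    constructor
    · rintro ⟨hxΛ, hxb⟩
      refine ⟨hxΛ, fun hxu' => ?_⟩
      have : x ∈ {x ∈ Λ | (Φ x).val 0 ≠ some b} := by rw [hCV]; exact ⟨hxu', hxΛ⟩
      exact this.2 hxb
    · rintro ⟨hxΛ, hxu'⟩
      refine ⟨hxΛ, ?_⟩
      by_contra hne
      have : x ∈ u' ∩ Λ := by rw [← hCV]; exact ⟨hxΛ, hne⟩
      exact hxu' this.1
  have hcomp : IsCompact Cb := by
    rw [hCb_eq]
    exact (hΛc.inter hu'o.isClosed_compl).isCompact
  have hsub : Cb ⊆ u := by rw [hCU]; exact Set.inter_subset_left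
  have hcover : Cb ⊆ ⋃ q : {q : List A × Finset A // Zcyl q.1 q.2 ⊆ u}, Zcyl q.1.1 q.1.2 := by
    intro x hx
    obtain ⟨w, F, hxw, hwsub⟩ := exists_cyl_subset huo (hsub hx)
    exact Set.mem_iUnion.2 ⟨⟨(w, F), hwsub⟩, hxw⟩
  obtain ⟨t, ht⟩ := hcomp.elim_finite_subcover
    (fun q : {q : List A × Finset A // Zcyl q.1 q.2 ⊆ u} => Zcyl q.1.1 q.1.2)
    (fun q => isOpen_Zcyl q.1.1 q.1.2) hcover
  set l := t.toList with hl
  refine ⟨l.length, fun i => (l.get i).1.1, fun i => (l.get i).1.2, ?_⟩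
  apply Set.Subset.antisymm
  · intro x hx
    refine ⟨hx.1, ?_⟩
    have := ht hx
    rw [Set.mem_iUnion₂] at this
    obtain ⟨q, hqt, hxq⟩ := this
    obtain ⟨i, hi⟩ := List.mem_iff_get.mp ((Finset.mem_toList).mpr hqt)
    refine Set.mem_iUnion.2 ⟨i, ?_⟩
    show x ∈ Zcyl (t.toList.get i).1.1 (t.toList.get i).1.2
    rw [hi]
    exact hxq
  · rintro x ⟨hxΛ, hxU⟩
    rw [Set.mem_iUnion] at hxU
    obtain ⟨i, hxi⟩ := hxU
    have hxu : x ∈ u := (l.get i).2 hxi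
    rw [hCU]
    exact ⟨hxu, hxΛ⟩

end ForwardCyl
/-- Curtis-Hedlund-Lyndon theorem, first form. Assuming `Φ(Ø) = Ø`
and `Φ⁻¹(Ø)` finitely defined, `Φ` is continuous and shift commuting iff `Φ` is a
sliding block code whose classes `C_a` (for letters `a` of `Γ`) are finite unions
of generalized cylinders of `Λ`. -/
theorem curtis_hedlund_lyndon_one {A B : Type*} [Countable A] [Infinite A] [Countable B] [Infinite B]
    (Λ : Set (FullShift A)) (Γ : Set (FullShift B))
    (hΛ : IsShiftSpace Λ) (hΓ : IsShiftSpace Γ)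
    (Φ : FullShift A → FullShift B) (hmap : Set.MapsTo Φ Λ Γ)
    (hO : emptySeq ∈ Λ) (hOO : Φ emptySeq = emptySeq)
    (hfd : FinitelyDefinedIn Λ (Λ ∩ Φ ⁻¹' {emptySeq})) :
    (ContinuousOn Φ Λ ∧ ∀ x ∈ Λ, Φ (shiftMap x) = shiftMap (Φ x)) ↔
      ∃ C : Option B → Set (FullShift A), IsSBCWith Λ Φ C ∧
        ∀ b : B, IsFinUnionCyl Λ (C (some b)) := by
  classical
  constructor
  · rintro ⟨hcont, hcomm⟩
    have hshift : ∀ x ∈ Λ, shiftMap x ∈ Λ := hΛ.2.1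
    have hit : ∀ x ∈ Λ, ∀ m : ℕ, Φ (shiftMap^[m] x) = shiftMap^[m] (Φ x) := by
      intro x hx m
      induction m with
      | zero => rfl
      | succ m ih =>
        rw [Function.iterate_succ_apply', Function.iterate_succ_apply',
          hcomm _ (iterate_mem hshift hx m), ih]
    have hPhiNone : ∀ x : FullShift A, (Φ x).val 0 = none → Φ x = emptySeq := by
      intro x h
      refine FullShift.ext (funext fun m => ?_)
      exact val_none_mono (Φ x) (Nat.zero_le m) h
    set Cl : Option B → Set (FullShift A) := fun a => {x ∈ Λ | (Φ x).val 0 = a} with hCl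
    have hfd' : Cl none = Λ ∩ Φ ⁻¹' {emptySeq} := by
      ext x
      simp only [hCl, Set.mem_setOf_eq, Set.mem_inter_iff, Set.mem_preimage,
        Set.mem_singleton_iff]
      constructor
      · rintro ⟨hxΛ, h0⟩
        exact ⟨hxΛ, hPhiNone x h0⟩
      · rintro ⟨hxΛ, h0⟩
        refine ⟨hxΛ, ?_⟩
        rw [h0]
        rfl
    have hcylb : ∀ b : B, IsFinUnionCyl Λ (Cl (some b)) := fun b => forward_cyl hΛ.1 hcont b
    refine ⟨Cl, ⟨fun a x hx => hx.1, fun x hx => ⟨(Φ x).val 0, ⟨hx, rfl⟩,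
      fun a' h' => h'.2.symm⟩, ?_, ?_, ?_⟩, hcylb⟩
    · intro a
      cases a with
      | none => rw [hfd']; exact hfd
      | some b => exact fd_of_finUnionCyl (hcylb b)
    · rintro x ⟨hxΛ, hx0⟩
      refine ⟨hshift x hxΛ, ?_⟩
      rw [hcomm x hxΛ, hPhiNone x hx0]
      rfl
    · intro x hx m
      refine ⟨iterate_mem hshift hx m, ?_⟩
      rw [hit x hx m, val_iterate, Nat.zero_add]
  · rintro ⟨C, hsbc, hcylb⟩
    exact ⟨backward_continuousOn Λ hΛ.2.1 Φ hO hOO C hsbc hcylb,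
      backward_commute Λ hΛ.2.1 Φ C hsbc⟩

end OTW
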